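/- Let R be a ring and let a⁻₁,…,a⁻ₙ, a⁺₁,…,a⁺ₙ ∈ R satisfy the pseudo-fermion relations of order n. Set F⁻ := Σᵢ a⁻ᵢ and F⁺ := Σᵢ a⁺ᵢ. Then Green's equations hold: [[F⁺, F⁻], F⁻] = −2F⁻ and [[F⁺, F⁻], F⁺] = 2F⁺. -/

import Mathlib

private lemma comm_sum {R : Type*} [Ring R] {n : ℕ} (x y : Fin n → R)
    (hoff : ∀ i j, i ≠ j → x i * y j = y j * x i) :
    (∑ i, x i) * (∑ i, y i) - (∑ i, y i) * (∑ i, x i)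
      = ∑ i, (x i * y i - y i * x i) := by
  rw [Finset.sum_mul_sum, Finset.sum_mul_sum,
    Finset.sum_comm (s := Finset.univ) (t := Finset.univ)
      (f := fun i j => y i * x j), ← Finset.sum_sub_distrib]
  refine Finset.sum_congr rfl fun i _ => ?_
  rw [← Finset.sum_sub_distrib]
  refine Finset.sum_eq_single i (fun j _ hj => ?_) (by simp)
  rw [hoff i j (Ne.symm hj), sub_self]

theorem stmt_10 {R : Type*} [Ring R] (n : ℕ) (am ap : Fin n → R)
    (hsq1 : ∀ i, am i * am i = 0) (hsq2 : ∀ i, ap i * ap i = 0)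
    (hc1 : ∀ i j, i ≠ j → am i * am j = am j * am i)
    (hc2 : ∀ i j, i ≠ j → ap i * ap j = ap j * ap i)
    (hc3 : ∀ i j, i ≠ j → am i * ap j = ap j * am i)
    (hacr : ∀ i, am i * ap i + ap i * am i = 1) :
    let Fm := ∑ i, am i
    let Fp := ∑ i, ap i
    (Fp * Fm - Fm * Fp) * Fm - Fm * (Fp * Fm - Fm * Fp) = -(2 * Fm) ∧
    (Fp * Fm - Fm * Fp) * Fp - Fp * (Fp * Fm - Fm * Fp) = 2 * Fp := by
  intro Fm Fp
  set c : Fin n → R := fun i => ap i * am i - am i * ap i with hcdef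
  have h1 : ∀ i, am i * ap i * am i = am i := by
    intro i
    have h := congrArg (am i * ·) (hacr i)
    simpa [mul_add, ← mul_assoc, hsq1 i] using h
  have h2 : ∀ i, ap i * am i * ap i = ap i := by
    intro i
    have h := congrArg (· * ap i) (hacr i)
    simpa [add_mul, mul_assoc, hsq2 i] using h
  have key : Fp * Fm - Fm * Fp = ∑ i, c i :=
    comm_sum ap am (fun i j h => (hc3 j i h.symm).symm)
  constructor
  · rw [key]
    have hoff : ∀ i j, i ≠ j → c i * am j = am j * c i := by
      intro i j hij
      have e1 : ap i * am i * am j = am j * (ap i * am i) := by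
        rw [mul_assoc, hc1 i j hij, ← mul_assoc, (hc3 j i hij.symm).symm,
          mul_assoc]
      have e2 : am i * ap i * am j = am j * (am i * ap i) := by
        rw [mul_assoc, ← hc3 j i hij.symm, ← mul_assoc, hc1 i j hij, mul_assoc]
      simp only [hcdef, sub_mul, mul_sub, e1, e2]
    rw [comm_sum c am hoff]
    have hdiag : ∀ i, c i * am i - am i * c i = -(2 * am i) := by
      intro i
      have e0 : ap i * am i * am i = 0 := by rw [mul_assoc, hsq1, mul_zero]
      have e0' : am i * (am i * ap i) = 0 := by rw [← mul_assoc, hsq1, zero_mul]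
      have e3 : am i * (ap i * am i) = am i := by rw [← mul_assoc]; exact h1 i
      simp only [hcdef, sub_mul, mul_sub, e0, e0', e3, h1 i]
      noncomm_ring
    simp only [hdiag, Finset.sum_neg_distrib, ← Finset.mul_sum]
    rfl
  · rw [key]
    have hoff : ∀ i j, i ≠ j → c i * ap j = ap j * c i := by
      intro i j hij
      have e1 : ap i * am i * ap j = ap j * (ap i * am i) := by
        rw [mul_assoc, hc3 i j hij, ← mul_assoc, hc2 i j hij, mul_assoc]
      have e2 : am i * ap i * ap j = ap j * (am i * ap i) := by
        rw [mul_assoc, hc2 i j hij, ← mul_assoc, hc3 i j hij, mul_assoc]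
      simp only [hcdef, sub_mul, mul_sub, e1, e2]
    rw [comm_sum c ap hoff]
    have hdiag : ∀ i, c i * ap i - ap i * c i = 2 * ap i := by
      intro i
      have e0 : am i * ap i * ap i = 0 := by rw [mul_assoc, hsq2, mul_zero]
      have e0' : ap i * (ap i * am i) = 0 := by rw [← mul_assoc, hsq2, zero_mul]
      have e3 : ap i * (am i * ap i) = ap i := by rw [← mul_assoc]; exact h2 i
      simp only [hcdef, sub_mul, mul_sub, e0, e0', e3, h2 i]
      noncomm_ring
    simp only [hdiag, ← Finset.mul_sum]
    rfl
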